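/- Let g be a finite-dimensional real Lie algebra and let m ∈ g. The following two statements are equivalent: (a) m together with the set of eigenvectors of ad(m) in g belonging to nonzero (real) eigenvalues generates g as a Lie algebra; (b) ad(m) : g → g is diagonalizable over ℝ and ℝ·m + [m,g] + [[m,g],[m,g]] = g, where for subsets A, B ⊆ g, [A,B] denotes the linear span of all brackets [a,b] with a ∈ A, b ∈ B. -/

import Mathlib

/-- The linear span of all brackets `⁅a, b⁆` with `a ∈ A`, `b ∈ B`. -/
def bracketSpan {L : Type*} [LieRing L] [LieAlgebra ℝ L] (A B : Submodule ℝ L) :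
    Submodule ℝ L :=
  Submodule.span ℝ {x | ∃ a ∈ A, ∃ b ∈ B, x = ⁅a, b⁆}

section Aux

variable {L : Type*} [LieRing L] [LieAlgebra ℝ L]

private lemma lie_mem_eig (m : L) {a b : ℝ} {x y : L}
    (hx : x ∈ (LieAlgebra.ad ℝ L m).eigenspace a)
    (hy : y ∈ (LieAlgebra.ad ℝ L m).eigenspace b) :
    ⁅x, y⁆ ∈ (LieAlgebra.ad ℝ L m).eigenspace (a + b) := by
  rw [Module.End.mem_eigenspace_iff, LieAlgebra.ad_apply] at hx hy ⊢
  rw [leibniz_lie, hx, hy, smul_lie, lie_smul, add_smul]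

private lemma eig_le_range (m : L) {c : ℝ} (hc : c ≠ 0) :
    (LieAlgebra.ad ℝ L m).eigenspace c ≤ LinearMap.range (LieAlgebra.ad ℝ L m) := by
  intro x hx
  rw [Module.End.mem_eigenspace_iff] at hx
  exact ⟨c⁻¹ • x, by rw [map_smul, hx, smul_smul, inv_mul_cancel₀ hc, one_smul]⟩

/-- Key computation: assuming diagonalizability, `⁅range (ad m), L⁆ ⊆ W` where
`W = ℝ·m ⊔ range (ad m) ⊔ [range, range]`. -/
private lemma lemA (m : L)
    (hdiag : (⨆ c : ℝ, (LieAlgebra.ad ℝ L m).eigenspace c) = ⊤) :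
    ∀ x z : L, ⁅LieAlgebra.ad ℝ L m x, z⁆ ∈
      (Submodule.span ℝ {m} ⊔ LinearMap.range (LieAlgebra.ad ℝ L m) ⊔
        bracketSpan (LinearMap.range (LieAlgebra.ad ℝ L m))
          (LinearMap.range (LieAlgebra.ad ℝ L m))) := by
  set R := LinearMap.range (LieAlgebra.ad ℝ L m) with hR
  set W := Submodule.span ℝ {m} ⊔ R ⊔ bracketSpan R R with hW
  have hRW : R ≤ W := le_sup_of_le_left le_sup_right
  have hSW : bracketSpan R R ≤ W := le_sup_right
  intro x
  have hx : x ∈ ⨆ c : ℝ, (LieAlgebra.ad ℝ L m).eigenspace c := hdiag ▸ Submodule.mem_top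
  refine Submodule.iSup_induction (motive := fun x => ∀ z : L, ⁅LieAlgebra.ad ℝ L m x, z⁆ ∈ W)
    _ hx ?_ ?_ ?_
  · intro c x hxc z
    have hx' := hxc
    rw [Module.End.mem_eigenspace_iff] at hx'
    rw [hx']
    rcases eq_or_ne c 0 with rfl | hc
    · rw [zero_smul, zero_lie]; exact zero_mem _
    rw [smul_lie]
    refine Submodule.smul_mem _ _ ?_
    have hz : z ∈ ⨆ d : ℝ, (LieAlgebra.ad ℝ L m).eigenspace d := hdiag ▸ Submodule.mem_top
    refine Submodule.iSup_induction (motive := fun z => ⁅x, z⁆ ∈ W) _ hz ?_ ?_ ?_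
    · intro d z hzd
      rcases eq_or_ne (c + d) 0 with hcd | hcd
      · have hd : d ≠ 0 := by
          intro h; rw [h, add_zero] at hcd; exact hc hcd
        refine hSW (Submodule.subset_span ?_)
        exact ⟨x, eig_le_range m hc hxc, z, eig_le_range m hd hzd, rfl⟩
      · exact hRW (eig_le_range m hcd (lie_mem_eig m hxc hzd))
    · show ⁅x, (0:L)⁆ ∈ W; rw [lie_zero]; exact zero_mem _
    · intro a b ha hb; show ⁅x, a + b⁆ ∈ W; rw [lie_add]; exact add_mem ha hb
  · intro z
    show ⁅LieAlgebra.ad ℝ L m 0, z⁆ ∈ W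
    rw [map_zero, zero_lie]; exact zero_mem _
  · intro a b ha hb z
    show ⁅LieAlgebra.ad ℝ L m (a + b), z⁆ ∈ W
    rw [map_add, add_lie]; exact add_mem (ha z) (hb z)

end Aux

/-- Lemma 2: for `m` in a finite-dimensional real Lie algebra `g`, the following are
equivalent: (a) `m` together with the eigenvectors of `ad m` for nonzero real eigenvalues
generates `g` as a Lie algebra; (b) `ad m` is diagonalizable over `ℝ` and
`ℝ·m + [m,g] + [[m,g],[m,g]] = g`. -/
theorem essential_iff {L : Type*} [LieRing L] [LieAlgebra ℝ L] [FiniteDimensional ℝ L]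
    (m : L) :
    LieSubalgebra.lieSpan ℝ L
        ({m} ∪ {x | x ≠ 0 ∧ ∃ c : ℝ, c ≠ 0 ∧ ⁅m, x⁆ = c • x}) = ⊤ ↔
      (⨆ c : ℝ, (LieAlgebra.ad ℝ L m).eigenspace c) = ⊤ ∧
        Submodule.span ℝ {m} ⊔ LinearMap.range (LieAlgebra.ad ℝ L m) ⊔
          bracketSpan (LinearMap.range (LieAlgebra.ad ℝ L m))
            (LinearMap.range (LieAlgebra.ad ℝ L m)) = ⊤ := by
  constructor
  · intro h
    -- Part 1 : diagonalizability
    have hdiag : (⨆ c : ℝ, (LieAlgebra.ad ℝ L m).eigenspace c) = ⊤ := by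
      -- the sup of the eigenspaces is a Lie subalgebra
      set V : Submodule ℝ L := ⨆ c : ℝ, (LieAlgebra.ad ℝ L m).eigenspace c with hV
      have hlie : ∀ x ∈ V, ∀ y ∈ V, ⁅x, y⁆ ∈ V := by
        intro x hx
        refine Submodule.iSup_induction (motive := fun x => ∀ y ∈ V, ⁅x, y⁆ ∈ V) _ hx ?_ ?_ ?_
        · intro a x hxa y hy
          refine Submodule.iSup_induction (motive := fun y => ⁅x, y⁆ ∈ V) _ hy ?_ ?_ ?_
          · intro b y hyb
            exact Submodule.mem_iSup_of_mem (a + b) (lie_mem_eig m hxa hyb)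
          · show ⁅x, (0:L)⁆ ∈ V; rw [lie_zero]; exact zero_mem _
          · intro u v hu hv; show ⁅x, u + v⁆ ∈ V; rw [lie_add]; exact add_mem hu hv
        · intro y _; show ⁅(0:L), y⁆ ∈ V; rw [zero_lie]; exact zero_mem _
        · intro u v hu hv y hy
          show ⁅u + v, y⁆ ∈ V
          rw [add_lie]; exact add_mem (hu y hy) (hv y hy)
      let K : LieSubalgebra ℝ L := { V with lie_mem' := fun hx hy => hlie _ hx _ hy }
      have hle : LieSubalgebra.lieSpan ℝ L
          ({m} ∪ {x | x ≠ 0 ∧ ∃ c : ℝ, c ≠ 0 ∧ ⁅m, x⁆ = c • x}) ≤ K := by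
        rw [LieSubalgebra.lieSpan_le]
        rintro x (rfl | ⟨-, c, -, hc⟩)
        · exact Submodule.mem_iSup_of_mem 0 (by
            rw [Module.End.mem_eigenspace_iff, LieAlgebra.ad_apply, lie_self, zero_smul])
        · exact Submodule.mem_iSup_of_mem c (by
            rw [Module.End.mem_eigenspace_iff, LieAlgebra.ad_apply, hc])
      rw [eq_top_iff]
      intro x _
      exact hle (h ▸ LieSubalgebra.mem_top x)
    refine ⟨hdiag, ?_⟩
    -- Part 2 : W = ⊤
    set R := LinearMap.range (LieAlgebra.ad ℝ L m) with hR
    set W := Submodule.span ℝ {m} ⊔ R ⊔ bracketSpan R R with hW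
    have hRW : R ≤ W := le_sup_of_le_left le_sup_right
    have hSW : bracketSpan R R ≤ W := le_sup_right
    have hMW : Submodule.span ℝ {m} ≤ W := le_sup_of_le_left le_sup_left
    have hA : ∀ x z : L, ⁅LieAlgebra.ad ℝ L m x, z⁆ ∈ W := lemA m hdiag
    have hS : ∀ s ∈ bracketSpan R R, ∀ z : L, ⁅s, z⁆ ∈ W := by
      intro s hs
      refine Submodule.span_induction ?_ ?_ ?_ ?_ hs
      · rintro s ⟨a, ⟨u, rfl⟩, b, ⟨v, rfl⟩, rfl⟩ z
        rw [lie_lie]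
        exact sub_mem (hA u _) (hA v _)
      · intro z; rw [zero_lie]; exact zero_mem _
      · intro a b _ _ ha hb z; rw [add_lie]; exact add_mem (ha z) (hb z)
      · intro t a _ ha z; rw [smul_lie]; exact Submodule.smul_mem _ _ (ha z)
    have hlie : ∀ {x y : L}, x ∈ W → y ∈ W → ⁅x, y⁆ ∈ W := by
      intro x y hx _
      rw [hW] at hx
      obtain ⟨u, hu, s, hsmem, rfl⟩ := Submodule.mem_sup.mp hx
      obtain ⟨p, hp, r, hrmem, rfl⟩ := Submodule.mem_sup.mp hu
      obtain ⟨t, rfl⟩ := Submodule.mem_span_singleton.mp hp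
      obtain ⟨v, rfl⟩ := hrmem
      rw [add_lie, add_lie, smul_lie]
      refine add_mem (add_mem (Submodule.smul_mem _ _ ?_) (hA v y)) (hS s hsmem y)
      exact hRW ⟨y, rfl⟩
    let K : LieSubalgebra ℝ L := { W with lie_mem' := fun hx hy => hlie hx hy }
    have hle : LieSubalgebra.lieSpan ℝ L
        ({m} ∪ {x | x ≠ 0 ∧ ∃ c : ℝ, c ≠ 0 ∧ ⁅m, x⁆ = c • x}) ≤ K := by
      rw [LieSubalgebra.lieSpan_le]
      rintro x (rfl | ⟨-, c, hc0, hc⟩)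
      · exact hMW (Submodule.mem_span_singleton_self x)
      · refine hRW (eig_le_range m hc0 ?_)
        rw [Module.End.mem_eigenspace_iff, LieAlgebra.ad_apply, hc]
    rw [eq_top_iff]
    intro x _
    exact hle (h ▸ LieSubalgebra.mem_top x)
  · rintro ⟨hdiag, hW⟩
    set K := LieSubalgebra.lieSpan ℝ L
      ({m} ∪ {x | x ≠ 0 ∧ ∃ c : ℝ, c ≠ 0 ∧ ⁅m, x⁆ = c • x}) with hK
    have hmK : m ∈ K := LieSubalgebra.subset_lieSpan (Or.inl rfl)
    have hRK : ∀ x : L, LieAlgebra.ad ℝ L m x ∈ K := by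
      intro x
      have hx : x ∈ ⨆ c : ℝ, (LieAlgebra.ad ℝ L m).eigenspace c := hdiag ▸ Submodule.mem_top
      refine Submodule.iSup_induction (motive := fun x => LieAlgebra.ad ℝ L m x ∈ K) _ hx ?_ ?_ ?_
      · intro c x hxc
        rw [Module.End.mem_eigenspace_iff] at hxc
        rw [hxc]
        rcases eq_or_ne c 0 with rfl | hc
        · rw [zero_smul]; exact zero_mem _
        rcases eq_or_ne x 0 with rfl | hx0
        · rw [smul_zero]; exact zero_mem _
        refine Submodule.smul_mem _ _ (LieSubalgebra.subset_lieSpan (Or.inr ⟨hx0, c, hc, ?_⟩))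
        rw [← LieAlgebra.ad_apply (R := ℝ), hxc]
      · show LieAlgebra.ad ℝ L m 0 ∈ K; rw [map_zero]; exact zero_mem _
      · intro a b ha hb
        show LieAlgebra.ad ℝ L m (a + b) ∈ K
        rw [map_add]; exact add_mem ha hb
    rw [eq_top_iff]
    intro x _
    have hx : x ∈ Submodule.span ℝ {m} ⊔ LinearMap.range (LieAlgebra.ad ℝ L m) ⊔
        bracketSpan (LinearMap.range (LieAlgebra.ad ℝ L m))
          (LinearMap.range (LieAlgebra.ad ℝ L m)) := hW ▸ Submodule.mem_top
    obtain ⟨u, hu, s, hsmem, rfl⟩ := Submodule.mem_sup.mp hx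
    obtain ⟨p, hp, r, hrmem, rfl⟩ := Submodule.mem_sup.mp hu
    obtain ⟨t, rfl⟩ := Submodule.mem_span_singleton.mp hp
    obtain ⟨v, rfl⟩ := hrmem
    refine add_mem (add_mem (Submodule.smul_mem _ _ hmK) (hRK v)) ?_
    refine Submodule.span_induction ?_ ?_ ?_ ?_ hsmem
    · rintro s ⟨a, ⟨u, rfl⟩, b, ⟨v, rfl⟩, rfl⟩
      exact K.lie_mem (hRK u) (hRK v)
    · exact zero_mem _
    · intro a b _ _ ha hb; exact add_mem ha hb
    · intro t a _ ha; exact Submodule.smul_mem _ _ ha
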